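/- Let G be a finite group and g ∈ G a semirational element of order n. Then e(g) ≤ j(n) + 2, where j(n) is the Jacobsthal function of n, i.e. the smallest positive integer m such that every sequence of m consecutive positive integers contains an integer coprime to n. -/
import Mathlib


/-- The generalized order of `g`: the smallest positive `k` such that some product of
`k` conjugates of `g` equals the identity. -/
noncomputable def genOrder {G : Type*} [Group G] (g : G) : ℕ :=
  sInf {k | 0 < k ∧ ∃ l : List G, l.length = k ∧ (l.map fun x => x⁻¹ * g * x).prod = 1}

/-- The Jacobsthal function: the smallest positive `m` such that every sequence of `m`
consecutive positive integers contains an integer coprime to `n`. -/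
noncomputable def jacobsthal (n : ℕ) : ℕ :=
  sInf {m | 0 < m ∧ ∀ a : ℕ, ∃ i, i < m ∧ Nat.Coprime (a + 1 + i) n}

theorem stmt6 {G : Type*} [Group G] [Finite G] (g : G) (n : ℕ) (hn : orderOf g = n)
    (hsemi : ∀ m : ℕ, Nat.Coprime m n → IsConj g (g ^ m) ∨ IsConj g⁻¹ (g ^ m)) :
    genOrder g ≤ jacobsthal n + 2 := by
  have hnpos : 0 < n := hn ▸ orderOf_pos g
  have hgn : g ^ n = 1 := hn ▸ pow_orderOf_eq_one g
  have hspec : ∀ a : ℕ, ∃ i, i < jacobsthal n ∧ Nat.Coprime (a + 1 + i) n := by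
    have hne : {m | 0 < m ∧ ∀ a : ℕ, ∃ i, i < m ∧ Nat.Coprime (a + 1 + i) n}.Nonempty := by
      refine ⟨n, hnpos, fun a => ?_⟩
      refine ⟨(n - a % n) % n, Nat.mod_lt _ hnpos, ?_⟩
      rcases Nat.eq_zero_or_pos (a % n) with h0 | h0
      · obtain ⟨k, hk⟩ := Nat.dvd_of_mod_eq_zero h0
        rw [h0, Nat.sub_zero, Nat.mod_self, Nat.add_zero, hk,
          show n * k + 1 = 1 + k * n by ring]
        exact (Nat.coprime_add_mul_right_left 1 n k).mpr (Nat.coprime_one_left n)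
      · have hlt : n - a % n < n := by omega
        rw [Nat.mod_eq_of_lt hlt]
        have hmd := Nat.mod_add_div a n
        have hle : a % n ≤ n := le_of_lt (Nat.mod_lt _ hnpos)
        have hexp : (a / n + 1) * n = n * (a / n) + n := by ring
        have heq : a + 1 + (n - a % n) = 1 + (a / n + 1) * n := by omega
        rw [heq]
        exact (Nat.coprime_add_mul_right_left 1 n _).mpr (Nat.coprime_one_left n)
    exact (Nat.sInf_mem hne).2
  have hmem : ∀ k : ℕ, 0 < k →
      (∃ l : List G, l.length = k ∧ (l.map fun x => x⁻¹ * g * x).prod = 1) →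
      genOrder g ≤ k := fun k hk hl => Nat.sInf_le ⟨hk, hl⟩
  have key : ∀ d c : ℕ, c + d = n → (∃ x : G, x⁻¹ * g * x = g ^ c) →
      genOrder g ≤ jacobsthal n + 2 := by
    intro d
    induction d using Nat.strong_induction_on with
    | _ d ih =>
      rintro c hcd ⟨x, hx⟩
      by_cases hdJ : d ≤ jacobsthal n + 1
      · refine le_trans (hmem (d + 1) (Nat.succ_pos d) ?_) (by omega)
        refine ⟨x :: List.replicate d 1, by simp, ?_⟩
        simp only [List.map_cons, List.map_replicate, List.prod_cons, List.prod_replicate,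
          hx, inv_one, one_mul, mul_one]
        rw [← pow_add, hcd, hgn]
      · push_neg at hdJ
        obtain ⟨i, hiJ, hcop⟩ := hspec (d - jacobsthal n - 1)
        obtain ⟨q, hqd⟩ : ∃ q, d - jacobsthal n - 1 + 1 + i = q := ⟨_, rfl⟩
        rw [hqd] at hcop
        have hq1 : 1 ≤ q := by omega
        have hq2 : q ≤ d - 1 := by omega
        rcases hsemi q hcop with hconj | hconj
        · obtain ⟨y, hy⟩ := isConj_iff.mp hconj
          refine le_trans (hmem (d - q + 2) (by omega) ?_) (by omega)
          refine ⟨x :: y⁻¹ :: List.replicate (d - q) 1, by simp, ?_⟩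
          simp only [List.map_cons, List.map_replicate, List.prod_cons, List.prod_replicate,
            hx, inv_inv, inv_one, one_mul, mul_one, hy]
          rw [← pow_add, ← pow_add, show c + (q + (d - q)) = n by omega, hgn]
        · obtain ⟨y, hy⟩ := isConj_iff.mp hconj
          refine ih q (by omega) (n - q) (by omega) ⟨y⁻¹, ?_⟩
          have h1 : y * g * y⁻¹ = (g ^ q)⁻¹ := by
            rw [← hy]; group
          have h2 : (g ^ q)⁻¹ = g ^ (n - q) := by
            have h3 : g ^ (n - q) * g ^ q = 1 := by
              rw [← pow_add, show n - q + q = n by omega, hgn]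
            exact (eq_inv_of_mul_eq_one_left h3).symm
          rw [inv_inv, h1, h2]
  exact key (n - 1) 1 (by omega) ⟨1, by simp⟩
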